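/- P(Y ∈ y_a, M ∈ m_a | X=1) + P(Y ∉ y_a, M ∈ m_a | X=0) − 1 ≤ μ(Y1 ∈ y_a, Y0 ∉ y_a, M1 ∈ m_a, M0 ∈ m_a) − μ(Y1 ∉ y_a, Y0 ∈ y_a, M1 ∈ m_a, M0 ∈ m_a), where μ(Y1 ∈ A, Y0 ∈ B, M1 ∈ C, M0 ∈ D) abbreviates the measure of the corresponding intersection of preimages. -/

import Mathlib

open MeasureTheory ProbabilityTheory

/-- Conditional probability `P(A | B) = mu(A ∩ B) / mu(B)` as a real number. -/
noncomputable def condP {Ω : Type*} [MeasurableSpace Ω] (μ : Measure Ω)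
    (A B : Set Ω) : ℝ :=
  (μ (A ∩ B)).toReal / (μ B).toReal

theorem statement15
    {Ω : Type*} [MeasurableSpace Ω] (μ : Measure Ω) [IsProbabilityMeasure μ]
    {ny nm : ℕ} (hny : 0 < ny) (hnm : 0 < nm)
    (Y1 Y0 Y : Ω → (Fin ny → ℝ)) (M1 M0 M : Ω → (Fin nm → ℝ)) (X : Ω → ℕ)
    (hY1meas : Measurable Y1) (hY0meas : Measurable Y0)
    (hM1meas : Measurable M1) (hM0meas : Measurable M0)
    (hXmeas : Measurable X) (hXbin : ∀ ω, X ω ≤ 1)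
    (hXpos : 0 < μ {ω | X ω = 1}) (hXlt : μ {ω | X ω = 1} < 1)
    (hindep : IndepFun X (fun ω => (Y1 ω, Y0 ω, M1 ω, M0 ω)) μ)
    (hYcons1 : ∀ ω, X ω = 1 → Y ω = Y1 ω)
    (hYcons0 : ∀ ω, X ω = 0 → Y ω = Y0 ω)
    (hMcons1 : ∀ ω, X ω = 1 → M ω = M1 ω)
    (hMcons0 : ∀ ω, X ω = 0 → M ω = M0 ω)
    (ya : Set (Fin ny → ℝ)) (ma : Set (Fin nm → ℝ))
    (hya : MeasurableSet ya) (hma : MeasurableSet ma)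
    :
    condP μ {ω | Y ω ∈ ya ∧ M ω ∈ ma} {ω | X ω = 1}
      + condP μ {ω | Y ω ∉ ya ∧ M ω ∈ ma} {ω | X ω = 0} - 1
    ≤ (μ {ω | Y1 ω ∈ ya ∧ Y0 ω ∉ ya ∧ M1 ω ∈ ma ∧ M0 ω ∈ ma}).toReal - (μ {ω | Y1 ω ∉ ya ∧ Y0 ω ∈ ya ∧ M1 ω ∈ ma ∧ M0 ω ∈ ma}).toReal := by
  set V : Ω → ((Fin ny → ℝ) × ((Fin ny → ℝ) × ((Fin nm → ℝ) × (Fin nm → ℝ)))) :=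
    fun ω => (Y1 ω, Y0 ω, M1 ω, M0 ω) with hV
  set A : Set Ω := {ω | Y1 ω ∈ ya ∧ M1 ω ∈ ma} with hA
  set B : Set Ω := {ω | Y0 ω ∉ ya ∧ M0 ω ∈ ma} with hB
  have hAmeas : MeasurableSet A := (hY1meas hya).inter (hM1meas hma)
  have hBmeas : MeasurableSet B := (hY0meas hya.compl).inter (hM0meas hma)
  have hX1 : {ω | X ω = 1} = X ⁻¹' {1} := rfl
  have hX0 : {ω | X ω = 0} = X ⁻¹' {0} := rfl
  have hμ1 : μ {ω | X ω = 1} ≠ 0 := hXpos.ne'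
  have hμ1top : μ {ω | X ω = 1} ≠ ⊤ := (measure_lt_top μ _).ne
  have hX0c : {ω | X ω = 0} = {ω | X ω = 1}ᶜ := by
    ext ω
    have := hXbin ω
    simp only [Set.mem_setOf_eq, Set.mem_compl_iff]
    omega
  have hX1meas : MeasurableSet {ω | X ω = 1} := hXmeas (measurableSet_singleton 1)
  have hμ0 : μ {ω | X ω = 0} ≠ 0 := by
    rw [hX0c, measure_compl hX1meas hμ1top, measure_univ]
    intro h
    exact hXlt.not_ge (tsub_eq_zero_iff_le.mp h)
  -- conditional probabilities reduce via independence
  have key : ∀ (s : Set Ω) (T : Set ((Fin ny → ℝ) × ((Fin ny → ℝ) × ((Fin nm → ℝ) × (Fin nm → ℝ))))) (x : ℕ),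
      MeasurableSet T → s ∩ {ω | X ω = x} = V ⁻¹' T ∩ {ω | X ω = x} →
      μ {ω | X ω = x} ≠ 0 →
      condP μ s {ω | X ω = x} = (μ (V ⁻¹' T)).toReal := by
    intro s T x hT hs hne
    have hVmeas : Measurable V :=
      hY1meas.prodMk (hY0meas.prodMk (hM1meas.prodMk hM0meas))
    have hind := hindep.measure_inter_preimage_eq_mul (s := {x}) (t := T)
      (measurableSet_singleton x) hT
    have hx : {ω | X ω = x} = X ⁻¹' {x} := rfl
    unfold condP
    have hne' : (μ (X ⁻¹' {x})).toReal ≠ 0 :=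
      ENNReal.toReal_ne_zero.mpr ⟨hne, (measure_lt_top μ _).ne⟩
    rw [hs, Set.inter_comm, hx, hind, ENNReal.toReal_mul, mul_comm,
      mul_div_assoc, div_self hne', mul_one]
  have h1 : condP μ {ω | Y ω ∈ ya ∧ M ω ∈ ma} {ω | X ω = 1} = (μ A).toReal := by
    have : A = V ⁻¹' {p | p.1 ∈ ya ∧ p.2.2.1 ∈ ma} := rfl
    rw [key {ω | Y ω ∈ ya ∧ M ω ∈ ma} {p | p.1 ∈ ya ∧ p.2.2.1 ∈ ma} 1
      ((measurable_fst hya).inter ((measurable_snd.comp measurable_snd |>.fst) hma))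
      ?_ hμ1, ← this]
    ext ω
    simp only [Set.mem_inter_iff, Set.mem_setOf_eq, Set.mem_preimage]
    constructor
    · rintro ⟨⟨hy, hm⟩, hx⟩
      exact ⟨⟨by show Y1 ω ∈ ya; rwa [← hYcons1 ω hx], by show M1 ω ∈ ma; rwa [← hMcons1 ω hx]⟩, hx⟩
    · rintro ⟨⟨hy, hm⟩, hx⟩
      exact ⟨⟨by rwa [hYcons1 ω hx], by rwa [hMcons1 ω hx]⟩, hx⟩
  have h0 : condP μ {ω | Y ω ∉ ya ∧ M ω ∈ ma} {ω | X ω = 0} = (μ B).toReal := by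
    have : B = V ⁻¹' {p | p.2.1 ∉ ya ∧ p.2.2.2 ∈ ma} := rfl
    rw [key {ω | Y ω ∉ ya ∧ M ω ∈ ma} {p | p.2.1 ∉ ya ∧ p.2.2.2 ∈ ma} 0
      (((measurable_fst.comp measurable_snd) hya).compl.inter
        ((measurable_snd.comp measurable_snd |>.snd) hma))
      ?_ hμ0, ← this]
    ext ω
    simp only [Set.mem_inter_iff, Set.mem_setOf_eq, Set.mem_preimage]
    constructor
    · rintro ⟨⟨hy, hm⟩, hx⟩
      exact ⟨⟨by show Y0 ω ∉ ya; rwa [← hYcons0 ω hx], by show M0 ω ∈ ma; rwa [← hMcons0 ω hx]⟩, hx⟩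
    · rintro ⟨⟨hy, hm⟩, hx⟩
      exact ⟨⟨by rwa [hYcons0 ω hx], by rwa [hMcons0 ω hx]⟩, hx⟩
  rw [h1, h0]
  -- identify RHS sets
  have hAB : {ω | Y1 ω ∈ ya ∧ Y0 ω ∉ ya ∧ M1 ω ∈ ma ∧ M0 ω ∈ ma} = A ∩ B := by
    ext ω; simp only [hA, hB, Set.mem_inter_iff, Set.mem_setOf_eq]; tauto
  set C : Set Ω := {ω | Y1 ω ∉ ya ∧ Y0 ω ∈ ya ∧ M1 ω ∈ ma ∧ M0 ω ∈ ma} with hC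
  rw [hAB]
  have hunion : μ (A ∪ B) + μ (A ∩ B) = μ A + μ B := measure_union_add_inter A hBmeas
  have hdisj : Disjoint (A ∪ B) C := by
    rw [Set.disjoint_left]
    rintro ω (hω | hω) hc
    · exact hc.1 hω.1
    · exact hω.1 hc.2.1
  have hle : μ (A ∪ B) + μ C ≤ 1 := by
    rw [← measure_union hdisj
      (((hY1meas hya.compl).inter ((hY0meas hya).inter ((hM1meas hma).inter (hM0meas hma)))))]
    exact prob_le_one
  have fin : ∀ s : Set Ω, μ s ≠ ⊤ := fun s => (measure_lt_top μ s).ne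
  have hu := ENNReal.toReal_mono ENNReal.one_ne_top hle
  rw [ENNReal.toReal_add (fin _) (fin _), ENNReal.toReal_one] at hu
  have ha : (μ (A ∪ B)).toReal + (μ (A ∩ B)).toReal = (μ A).toReal + (μ B).toReal := by
    rw [← ENNReal.toReal_add (fin _) (fin _), ← ENNReal.toReal_add (fin _) (fin _), hunion]
  linarith
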